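/- Let α = \overline{01} (the string 010101⋯ repeating 01) and β = 1\overline{0} (the string 1000⋯, a 1 followed by all 0s). Then (α,β) is an admissible pair, and a decimal d belongs to Ω^•_{(α,β)} if and only if d does not contain 11 as a substring, i.e., there is no j ∈ ℤ with d(j) = 1 and d(j+1) = 1. -/

import Mathlib

open scoped Classical

/-- Infinite binary strings. -/
abbrev Omega : Type := ℕ → Bool

/-- The shift operator. -/
def shift (ω : Omega) : Omega := fun n => ω (n + 1)

/-- Strict lexicographic order on `Omega`. -/
def lexLt (σ ω : Omega) : Prop :=
  ∃ k : ℕ, (∀ i, i < k → σ i = ω i) ∧ σ k < ω k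

/-- Non-strict lexicographic order on `Omega`. -/
def lexLe (σ ω : Omega) : Prop := lexLt σ ω ∨ σ = ω

/-- An admissible pair of strings. -/
def Admissible (α β : Omega) : Prop :=
  α 0 = false ∧ α 1 = true ∧ β 0 = true ∧ β 1 = false ∧
  (∀ n : ℕ, ¬ (lexLt α (shift^[n] α) ∧ lexLe (shift^[n] α) β)) ∧
  (∀ n : ℕ, ¬ (lexLe α (shift^[n] β) ∧ lexLt (shift^[n] β) β))

/-- The address space `Ω_{(α,β,−)}`. -/
def OmegaMinus (α β : Omega) : Set Omega :=
  {ω | ∀ n : ℕ, ¬ (lexLt α (shift^[n] ω) ∧ lexLe (shift^[n] ω) β)}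

/-- The address space `Ω_{(α,β,+)}`. -/
def OmegaPlus (α β : Omega) : Set Omega :=
  {ω | ∀ n : ℕ, ¬ (lexLe α (shift^[n] ω) ∧ lexLt (shift^[n] ω) β)}

/-- The address space `Ω_{(α,β)}`. -/
def OmegaUnion (α β : Omega) : Set Omega := OmegaMinus α β ∪ OmegaPlus α β

/-- Length-`n` initial segments of the elements of `Γ`. -/
def initSegs (Γ : Set Omega) (n : ℕ) : Set (Fin n → Bool) :=
  (fun ω (i : Fin n) => ω i) '' Γ

/-- Exponential growth rate `h(Γ)`. -/
noncomputable def growth (Γ : Set Omega) : ℝ :=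
  Filter.limsup (fun n : ℕ => Real.log ((initSegs Γ n).ncard) / (n : ℝ)) Filter.atTop

/-- The projection map `π_x`. -/
noncomputable def proj (x : ℝ) (ω : Omega) : ℝ :=
  (1 - x) * ∑' k : ℕ, (if ω k then (1 : ℝ) else 0) * x ^ k

/-- The equation `Σ α_n x^n = Σ β_n x^n`. -/
def seriesEq (α β : Omega) (x : ℝ) : Prop :=
  (∑' n : ℕ, (if α n then (1 : ℝ) else 0) * x ^ n) =
    (∑' n : ℕ, (if β n then (1 : ℝ) else 0) * x ^ n)

/-- Solutions in `[1/2,1)` of `Σ α_n x^n = Σ β_n x^n`. -/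
def baseSet (α β : Omega) : Set ℝ :=
  {x : ℝ | x ∈ Set.Ico (1/2 : ℝ) 1 ∧ seriesEq α β x}

/-- A decimal: a two-sided binary string vanishing far to the left. -/
def IsDecimal (d : ℤ → Bool) : Prop := ∃ m : ℤ, ∀ j, j < m → d j = false

/-- Strict order on decimals. -/
def decLt (d e : ℤ → Bool) : Prop :=
  ∃ j : ℤ, (∀ i, i < j → d i = e i) ∧ d j < e j

/-- The set `Γ^•` of decimals obtained from strings in `Γ`. -/
def dot (Γ : Set Omega) : Set (ℤ → Bool) :=
  {d | ∃ m : ℤ, ∃ γ ∈ Γ, (∀ j, j < m → d j = false) ∧ ∀ i : ℕ, d (m + i) = γ i}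

/-- Prepend a `0` to a string. -/
def cons0 (ω : Omega) : Omega := fun n => match n with | 0 => false | k + 1 => ω k

/-- The space `Ω⁰_{(α,β,−)}`. -/
def Omega0Minus (α β : Omega) : Set Omega :=
  {ω ∈ OmegaMinus α β | lexLe (cons0 ω) α}

/-- The space `Ω⁰_{(α,β,+)}`. -/
def Omega0Plus (α β : Omega) : Set Omega :=
  {ω ∈ OmegaPlus α β | lexLt (cons0 ω) α}

/-- The address space of decimals `Ω^•_{(α,β,−)}`. -/
def dotMinus (α β : Omega) : Set (ℤ → Bool) := dot (Omega0Minus α β)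

/-- The address space of decimals `Ω^•_{(α,β,+)}`. -/
def dotPlus (α β : Omega) : Set (ℤ → Bool) := dot (Omega0Plus α β)

/-- The address space of decimals `Ω^•_{(α,β)}`. -/
def dotUnion (α β : Omega) : Set (ℤ → Bool) :=
  dot (Omega0Minus α β ∪ Omega0Plus α β)

/-- The radix map `d ↦ Σ_{j ∈ ℤ} d(j)·B^(−j)`. -/
noncomputable def radixVal (B : ℝ) (d : ℤ → Bool) : ℝ :=
  ∑' j : ℤ, (if d j then (1 : ℝ) else 0) * B ^ (-j)

/-- Shift invariance for a set of decimals. -/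
def ShiftInvariantDec (Γ : Set (ℤ → Bool)) : Prop :=
  ∀ d ∈ Γ, ∀ k m : ℤ,
    (fun j : ℤ => if m ≤ j then d (j + k) else false) ∈ Γ

section Stmt17Aux

/-- `α = \overline{01}`. -/
def Aw : Omega := fun n => decide (n % 2 = 1)

/-- `β = 1\overline{0}`. -/
def Bw : Omega := fun n => decide (n = 0)

/-- No `11` substring. -/
def NoEleven (γ : Omega) : Prop := ∀ i, ¬ (γ i = true ∧ γ (i + 1) = true)

lemma bool_lt_iff (a b : Bool) : a < b ↔ a = false ∧ b = true := by
  revert a b; decide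

lemma shift_iter (n : ℕ) (γ : Omega) (i : ℕ) : shift^[n] γ i = γ (i + n) := by
  induction n generalizing γ i with
  | zero => rfl
  | succ n ih => rw [Function.iterate_succ_apply, ih]; rfl

lemma lexLt_irrefl (σ : Omega) : ¬ lexLt σ σ := by
  rintro ⟨k, -, h⟩; exact lt_irrefl _ h

lemma lexLt_asymm {σ ω : Omega} (h1 : lexLt σ ω) (h2 : lexLt ω σ) : False := by
  obtain ⟨k1, e1, l1⟩ := h1
  obtain ⟨k2, e2, l2⟩ := h2
  rcases lt_trichotomy k1 k2 with h | h | h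
  · rw [e2 k1 h] at l1; exact lt_irrefl _ l1
  · subst h; exact lt_asymm l1 l2
  · rw [e1 k2 h] at l2; exact lt_irrefl _ l2

lemma lexLt_ne {σ ω : Omega} (h : lexLt σ ω) : σ ≠ ω := by
  rintro rfl; exact lexLt_irrefl _ h

lemma lt_beta_first {σ : Omega} (h : lexLt σ Bw) : σ 0 = false := by
  obtain ⟨k, e, l⟩ := h
  rw [bool_lt_iff] at l
  have hk : k = 0 := by simpa [Bw] using l.2
  subst hk; exact l.1

lemma no_mid {σ : Omega} (hσ : NoEleven σ) (h0 : σ 0 = false)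
    (h : lexLt Aw σ) : False := by
  obtain ⟨k, e, l⟩ := h
  rw [bool_lt_iff] at l
  have hk2 : k % 2 = 0 := by have := l.1; simp [Aw] at this; omega
  rcases Nat.eq_zero_or_pos k with h0' | hpos
  · subst h0'; rw [l.2] at h0; simp at h0
  · obtain ⟨t, rfl⟩ : ∃ t, k = t + 2 := ⟨k - 2, by omega⟩
    have ha : σ (t + 1) = true := by
      have := (e (t + 1) (by omega)).symm
      rw [this]; simp [Aw]; omega
    exact hσ (t + 1) ⟨ha, l.2⟩

lemma in_interval_eq_beta {σ : Omega} (hσ : NoEleven σ)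
    (h1 : lexLt Aw σ) (h2 : lexLe σ Bw) : σ = Bw := by
  rcases h2 with h2 | h2
  · exact (no_mid hσ (lt_beta_first h2) h1).elim
  · exact h2

lemma in_interval_eq_alpha {σ : Omega} (hσ : NoEleven σ)
    (h1 : lexLe Aw σ) (h2 : lexLt σ Bw) : σ = Aw := by
  rcases h1 with h1 | h1
  · exact (no_mid hσ (lt_beta_first h2) h1).elim
  · exact h1.symm

lemma noeleven_shift {γ : Omega} (hγ : NoEleven γ) (n : ℕ) :
    NoEleven (shift^[n] γ) := by
  intro i h
  rw [shift_iter, shift_iter] at h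
  exact hγ (i + n) ⟨h.1, (show i + 1 + n = i + n + 1 by omega) ▸ h.2⟩

lemma cons0_le {γ : Omega} (hγ : NoEleven γ) : lexLe (cons0 γ) Aw := by
  by_cases h : cons0 γ = Aw
  · exact Or.inr h
  · left
    have hne : ∃ k, cons0 γ k ≠ Aw k := by
      by_contra hc
      push_neg at hc
      exact h (funext hc)
    have hk : cons0 γ (Nat.find hne) ≠ Aw (Nat.find hne) := Nat.find_spec hne
    have hmin : ∀ i, i < Nat.find hne → cons0 γ i = Aw i := by
      intro i hi
      by_contra hci
      exact Nat.find_min hne hi hci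
    have key : cons0 γ (Nat.find hne) = false ∧ Aw (Nat.find hne) = true := by
      cases hb : cons0 γ (Nat.find hne) <;> cases ha : Aw (Nat.find hne)
      · simp [hb, ha] at hk
      · exact ⟨rfl, rfl⟩
      · -- cons0 γ k = true, Aw k = false : contradiction with NoEleven
        exfalso
        have hk2 : Nat.find hne % 2 = 0 := by
          have := ha; simp only [Aw] at this; exact Nat.mod_two_ne_one.mp (of_decide_eq_false this)
        have hk0 : Nat.find hne ≠ 0 := by
          intro h0
          apply hk
          rw [h0]
          rfl
        obtain ⟨t, ht⟩ : ∃ t, Nat.find hne = t + 2 := ⟨Nat.find hne - 2, by omega⟩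
        have ha1 : cons0 γ (t + 1) = true := by
          rw [hmin (t + 1) (by omega)]
          simp [Aw]; omega
        have ha2 : cons0 γ (t + 2) = true := ht ▸ hb
        exact hγ t ⟨ha1, ha2⟩
      · simp [hb, ha] at hk
    exact ⟨Nat.find hne, hmin, by rw [bool_lt_iff]; exact key⟩

lemma mem_of_noeleven {γ : Omega} (hγ : NoEleven γ) :
    γ ∈ Omega0Minus Aw Bw ∪ Omega0Plus Aw Bw := by
  by_cases hE : ∃ n, shift^[n] γ = Bw
  · right
    obtain ⟨n, hn⟩ := hE
    have hpt : ∀ i, γ (i + n) = Bw i := fun i => by rw [← hn, shift_iter]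
    constructor
    · intro m hm
      obtain ⟨h1, h2⟩ := hm
      have heq := in_interval_eq_alpha (noeleven_shift hγ m) h1 h2
      have h1' : γ (2 * n + 1 + m) = true := by
        have := congrFun heq (2 * n + 1)
        rw [shift_iter] at this
        rw [show 2 * n + 1 + m = 2 * n + 1 + m from rfl]
        have : γ (2 * n + 1 + m) = Aw (2 * n + 1) := this
        rw [this]; simp [Aw]
      have h2' : γ (2 * n + 1 + m) = false := by
        have := hpt (n + 1 + m)
        rw [show n + 1 + m + n = 2 * n + 1 + m by omega] at this
        rw [this]; simp [Bw]
      rw [h1'] at h2'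
      simp at h2'
    · rcases cons0_le hγ with h | h
      · exact h
      · exfalso
        have h1' : γ (2 * n + 2) = true := by
          have := congrFun h (2 * n + 3)
          have : γ (2 * n + 2) = Aw (2 * n + 3) := this
          rw [this]; simp [Aw]
        have h2' : γ (2 * n + 2) = false := by
          have := hpt (n + 2)
          rw [show n + 2 + n = 2 * n + 2 by omega] at this
          rw [this]; simp [Bw]
        rw [h1'] at h2'
        simp at h2'
  · left
    constructor
    · intro n hn
      obtain ⟨h1, h2⟩ := hn
      exact hE ⟨n, in_interval_eq_beta (noeleven_shift hγ n) h1 h2⟩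
    · exact cons0_le hγ

lemma noeleven_of_mem {γ : Omega}
    (h : γ ∈ Omega0Minus Aw Bw ∪ Omega0Plus Aw Bw) : NoEleven γ := by
  by_contra hc
  have hex : ∃ i, γ i = true ∧ γ (i + 1) = true := by
    by_contra hc2
    exact hc (fun i hi => hc2 ⟨i, hi⟩)
  have hspec := Nat.find_spec hex
  rcases Nat.eq_zero_or_pos (Nat.find hex) with h0 | hpos
  · -- 11 at the start
    have hg0 : γ 0 = true := h0 ▸ hspec.1
    have hg1 : γ 1 = true := by
      have := hspec.2; rw [h0] at this; exact this
    have hlt : lexLt Aw (cons0 γ) := by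
      refine ⟨2, ?_, ?_⟩
      · intro i hi
        interval_cases i
        · rfl
        · show Aw 1 = cons0 γ 1
          have : cons0 γ 1 = γ 0 := rfl
          rw [this, hg0]; rfl
      · rw [bool_lt_iff]
        exact ⟨rfl, (show cons0 γ 2 = γ 1 from rfl).trans hg1⟩
    rcases h with ⟨-, hle⟩ | ⟨-, hlt'⟩
    · rcases hle with hlt' | heq
      · exact lexLt_asymm hlt hlt'
      · exact lexLt_ne hlt heq.symm
    · exact lexLt_asymm hlt hlt'
  · obtain ⟨t, ht⟩ : ∃ t, Nat.find hex = t + 1 := ⟨Nat.find hex - 1, by omega⟩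
    have hγt : γ t = false := by
      by_contra hb
      have hb' : γ t = true := by
        cases hgt : γ t
        · exact absurd hgt hb
        · rfl
      have hgt1 : γ (t + 1) = true := ht ▸ hspec.1
      exact Nat.find_min hex (by omega) ⟨hb', hgt1⟩
    have hgt1 : γ (t + 1) = true := ht ▸ hspec.1
    have hgt2 : γ (t + 2) = true := by
      have := hspec.2; rw [ht] at this; exact this
    have hA : lexLt Aw (shift^[t] γ) := by
      refine ⟨2, ?_, ?_⟩
      · intro i hi
        interval_cases i
        · show Aw 0 = shift^[t] γ 0
          rw [shift_iter]
          simp only [Nat.zero_add]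
          rw [hγt]; rfl
        · show Aw 1 = shift^[t] γ 1
          rw [shift_iter, show 1 + t = t + 1 by omega, hgt1]; rfl
      · rw [bool_lt_iff]
        refine ⟨rfl, ?_⟩
        rw [shift_iter, show 2 + t = t + 2 by omega]; exact hgt2
    have hB : lexLt (shift^[t] γ) Bw := by
      refine ⟨0, fun i hi => absurd hi (by omega), ?_⟩
      rw [bool_lt_iff]
      refine ⟨?_, rfl⟩
      rw [shift_iter]
      simpa using hγt
    rcases h with ⟨hm, -⟩ | ⟨hp, -⟩
    · exact hm t ⟨hA, Or.inl hB⟩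
    · exact hp t ⟨Or.inl hA, hB⟩

end Stmt17Aux

/-- For `α = \overline{01}` and `β = 1\overline{0}`, the pair `(α,β)` is
admissible and a decimal lies in `Ω^•_{(α,β)}` iff it does not contain `11` as a
substring. -/
theorem stmt_17 :
    Admissible (fun n => decide (n % 2 = 1)) (fun n => decide (n = 0)) ∧
    ∀ d : ℤ → Bool, IsDecimal d →
      (d ∈ dotUnion (fun n => decide (n % 2 = 1)) (fun n => decide (n = 0)) ↔
        ¬ ∃ j : ℤ, d j = true ∧ d (j + 1) = true) := by
  show Admissible Aw Bw ∧ _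
  constructor
  · refine ⟨rfl, rfl, rfl, rfl, ?_, ?_⟩
    · intro n hn
      obtain ⟨h1, h2⟩ := hn
      rcases Nat.even_or_odd n with he | ho
      · obtain ⟨m, rfl⟩ := he
        have heq : shift^[m + m] Aw = Aw := by
          funext i
          rw [shift_iter]
          simp only [Aw, decide_eq_decide]
          omega
        rw [heq] at h1
        exact lexLt_irrefl _ h1
      · obtain ⟨m, rfl⟩ := ho
        have hσ : ∀ i, shift^[2 * m + 1] Aw i = decide (i % 2 = 0) := by
          intro i
          rw [shift_iter]
          simp only [Aw, decide_eq_decide]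
          omega
        rcases h2 with h2 | h2
        · obtain ⟨k, e, l⟩ := h2
          rw [bool_lt_iff] at l
          have hk0 : k = 0 := by simpa [Bw] using l.2
          subst hk0
          have := hσ 0
          rw [l.1] at this
          simp at this
        · have := congrFun h2 2
          rw [hσ 2] at this
          simp [Bw] at this
    · intro n hn
      obtain ⟨h1, h2⟩ := hn
      rcases n with - | m
      · rw [Function.iterate_zero_apply] at h2
        exact lexLt_irrefl _ h2
      · have hσ : ∀ i, shift^[m + 1] Bw i = false := by
          intro i
          rw [shift_iter]
          simp [Bw]
        rcases h1 with h1 | h1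
        · obtain ⟨k, e, l⟩ := h1
          rw [bool_lt_iff] at l
          rw [hσ k] at l
          simp at l
        · have := congrFun h1 1
          rw [hσ 1] at this
          simp [Aw] at this
  · intro d hd
    constructor
    · rintro ⟨m, γ, hγ, hz, hrep⟩ hj
      obtain ⟨j, hj1, hj2⟩ := hj
      have hng := noeleven_of_mem hγ
      have hjm : m ≤ j := by
        by_contra hlt
        push_neg at hlt
        have := hz j hlt
        rw [this] at hj1
        simp at hj1
      set i : ℕ := (j - m).toNat with hidef
      have hi : (i : ℤ) = j - m := Int.toNat_of_nonneg (by omega)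
      apply hng i
      constructor
      · have := hrep i
        rw [show (m + (i : ℤ)) = j by omega] at this
        rw [← this]; exact hj1
      · have := hrep (i + 1)
        rw [show (m + ((i : ℕ) + 1 : ℕ) : ℤ) = j + 1 by push_cast; omega] at this
        rw [← this]; exact hj2
    · intro hno
      obtain ⟨m, hm⟩ := hd
      refine ⟨m, fun i => d (m + i), mem_of_noeleven ?_, fun j hj => hm j hj,
        fun i => rfl⟩
      intro i hi
      obtain ⟨h1, h2⟩ := hi
      apply hno
      refine ⟨m + i, h1, ?_⟩
      rw [show (m + (i : ℤ) + 1) = m + ((i : ℕ) + 1 : ℕ) by push_cast; ring]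
      exact h2
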